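/- Suppose all points of S = R ∪ B ∪ P lie on a common line. Then for every edge uv of a minimum red-blue-purple spanning graph of (R,B,P), no purple point of P lies in the open segment between u and v. Equivalently, every edge has both of its endpoints in the same block S_j of the partition of the line into the region left of the leftmost purple point, the regions between consecutive purple points, and the region right of the rightmost purple point (each block including its delimiting purple points). -/

import Mathlib

open scoped Classical

noncomputable section

/-- The Euclidean plane. -/
abbrev Pt : Type := EuclideanSpace ℝ (Fin 2)

/-- The simple graph on the plane whose edge set is the finite set `E`. -/
def graphOf (E : Finset (Sym2 Pt)) : SimpleGraph Pt where
  Adj x y := x ≠ y ∧ s(x, y) ∈ E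
  symm := ⟨fun x y ⟨hne, he⟩ => ⟨hne.symm, by rwa [Sym2.eq_swap]⟩⟩
  loopless := ⟨fun x ⟨hne, _⟩ => hne rfl⟩

/-- Euclidean length of an edge. -/
def edgeLen (e : Sym2 Pt) : ℝ :=
  Sym2.lift ⟨fun x y => dist x y, fun _ _ => dist_comm _ _⟩ e

/-- Total Euclidean length of a finite edge set. -/
def weight (E : Finset (Sym2 Pt)) : ℝ := ∑ e ∈ E, edgeLen e

lemma edgeLen_mk (x y : Pt) : edgeLen s(x, y) = dist x y := rfl

lemma edgeLen_nonneg (e : Sym2 Pt) : 0 ≤ edgeLen e :=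
  Sym2.ind (fun x y => (edgeLen_mk x y).symm ▸ dist_nonneg) e

lemma weight_erase {E : Finset (Sym2 Pt)} {e : Sym2 Pt} (he : e ∈ E) :
    weight (E.erase e) = weight E - edgeLen e := Finset.sum_erase_eq_sub he

lemma weight_insert_le (E : Finset (Sym2 Pt)) (e : Sym2 Pt) :
    weight (insert e E) ≤ edgeLen e + weight E := by
  by_cases h : e ∈ E
  · rw [Finset.insert_eq_self.2 h]
    nlinarith [edgeLen_nonneg e]
  · rw [weight, Finset.sum_insert h]; rfl

lemma connected_transfer {V : Type*} {G H : SimpleGraph V}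
    (h : ∀ ⦃x y⦄, G.Adj x y → H.Reachable x y) (hG : G.Connected) : H.Connected := by
  haveI := hG.nonempty
  refine ⟨fun x y => ?_⟩
  obtain ⟨w⟩ := hG.preconnected x y
  induction w with
  | nil => exact SimpleGraph.Reachable.refl _
  | cons ha _ ih => exact (h ha).trans ih

lemma induce_mono_graphOf {E F : Finset (Sym2 Pt)} (h : E ⊆ F) (X : Set Pt) :
    (graphOf E).induce X ≤ (graphOf F).induce X := by
  intro a b hab
  exact ⟨hab.1, h hab.2⟩

/-- Surgery helper. -/
lemma reach_or_aux {E : Finset (Sym2 Pt)} {X : Set Pt} (u v : X) {a c : X}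
    (w : ((graphOf E).induce X).Walk a c) :
    ((graphOf (E.erase s((u:Pt), (v:Pt)))).induce X).Reachable a c ∨
    ((graphOf (E.erase s((u:Pt), (v:Pt)))).induce X).Reachable a u ∨
      ((graphOf (E.erase s((u:Pt), (v:Pt)))).induce X).Reachable a v := by
  induction w with
  | nil => exact Or.inl (SimpleGraph.Reachable.refl _)
  | @cons a b c hadj w ih =>
    by_cases hf : s((a:Pt), (b:Pt)) = s((u:Pt), (v:Pt))
    · rcases Sym2.eq_iff.1 hf with ⟨h1, _⟩ | ⟨h1, _⟩
      · exact Or.inr (Or.inl (by rw [Subtype.ext h1]))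
      · exact Or.inr (Or.inr (by rw [Subtype.ext h1]))
    · have hadj' : ((graphOf (E.erase s((u:Pt), (v:Pt)))).induce X).Adj a b :=
        ⟨hadj.1, Finset.mem_erase.2 ⟨hf, hadj.2⟩⟩
      rcases ih with h | h | h
      · exact Or.inl (hadj'.reachable.trans h)
      · exact Or.inr (Or.inl (hadj'.reachable.trans h))
      · exact Or.inr (Or.inr (hadj'.reachable.trans h))

/-- Surgery: removing edge `s(u,v)` from a connected induced graph, any vertex still
reaches `u` or `v`. -/
lemma reach_or {E : Finset (Sym2 Pt)} {X : Set Pt} {u v : X}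
    (hconn : ((graphOf E).induce X).Connected) (x : X) :
    ((graphOf (E.erase s((u:Pt), (v:Pt)))).induce X).Reachable x u ∨
      ((graphOf (E.erase s((u:Pt), (v:Pt)))).induce X).Reachable x v := by
  obtain ⟨w⟩ := hconn.preconnected x u
  rcases reach_or_aux u v w with h | h | h
  · exact Or.inl h
  · exact Or.inl h
  · exact Or.inr h

/-- A walk in the induced graph on `X` whose support lies in `Y` gives reachability in the
induced graph on `Y`. -/
lemma reachable_in_other {E : Finset (Sym2 Pt)} {X Y : Set Pt} {a b : X}
    (w : ((graphOf E).induce X).Walk a b) (h : ∀ z ∈ w.support, (z : Pt) ∈ Y)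
    (ha : (a : Pt) ∈ Y) (hb : (b : Pt) ∈ Y) :
    ((graphOf E).induce Y).Reachable ⟨a, ha⟩ ⟨b, hb⟩ := by
  induction w with
  | nil => exact SimpleGraph.Reachable.refl _
  | @cons a c b hadj w ih =>
    have hc : (c : Pt) ∈ Y := h c (by simp [SimpleGraph.Walk.support_cons])
    have step : ((graphOf E).induce Y).Adj ⟨(a:Pt), ha⟩ ⟨(c:Pt), hc⟩ := ⟨hadj.1, hadj.2⟩
    exact step.reachable.trans (ih (fun z hz => h z (by simp [SimpleGraph.Walk.support_cons, hz])) hc hb)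

/-- Transfer a walk into the induced graph of another edge set containing (the images of) all
its edges. -/
lemma walk_reach_mono {E F : Finset (Sym2 Pt)} {X : Set Pt} {a b : X}
    (w : ((graphOf E).induce X).Walk a b)
    (h : ∀ g ∈ w.edges, Sym2.map (Subtype.val) g ∈ F) :
    ((graphOf F).induce X).Reachable a b := by
  induction w with
  | nil => exact SimpleGraph.Reachable.refl _
  | @cons a c b hadj w ih =>
    have hg : Sym2.map (Subtype.val) s(a, c) ∈ F := h _ (by simp [SimpleGraph.Walk.edges_cons])
    rw [Sym2.map_pair_eq] at hg
    have step : ((graphOf F).induce X).Adj a c := ⟨hadj.1, hg⟩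
    exact step.reachable.trans (ih (fun g hgs => h g (by simp [SimpleGraph.Walk.edges_cons, hgs])))

lemma edge_of_walk_mem {E : Finset (Sym2 Pt)} {X : Set Pt} {a b : X}
    (w : ((graphOf E).induce X).Walk a b) {g : Sym2 X} (hg : g ∈ w.edges) :
    Sym2.map (Subtype.val) g ∈ E := by
  have := w.edges_subset_edgeSet hg
  induction g using Sym2.ind with
  | _ x y =>
    rw [Sym2.map_pair_eq]
    exact ((SimpleGraph.mem_edgeSet _).1 this).2

/-- Generalized RBP predicate. -/
def NiceG (Z : Finset Pt) (X Y : Set Pt) (E : Finset (Sym2 Pt)) : Prop :=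
  (∀ e ∈ E, ¬ e.IsDiag) ∧
  (∀ e ∈ E, ∀ x ∈ e, x ∈ Z) ∧
  ((graphOf E).induce X).Connected ∧
  ((graphOf E).induce Y).Connected

lemma NiceG.swap {Z : Finset Pt} {X Y : Set Pt} {E : Finset (Sym2 Pt)}
    (h : NiceG Z X Y E) : NiceG Z Y X E := ⟨h.1, h.2.1, h.2.2.2, h.2.2.1⟩

/-- The easy exchange: if (after deleting `s(u,v)`) `p` reaches `v` in the `X`-graph, and
(whenever `u, v ∈ Y`) also in the `Y`-graph, then inserting `s(u,p)` gives a strictly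
cheaper `NiceG` set, contradicting minimality. -/
lemma RBP_easy_up (Z : Finset Pt) (X Y : Set Pt) (E : Finset (Sym2 Pt))
    (hN : NiceG Z X Y E) (hm : ∀ E', NiceG Z X Y E' → weight E ≤ weight E')
    (u v p : Pt) (he : s(u, v) ∈ E)
    (hpu : p ≠ u) (hpv : p ≠ v) (hdlt : dist u p < dist u v)
    (hpZ : p ∈ Z) (hpX : p ∈ X) (hpY : p ∈ Y) (huX : u ∈ X) (hvX : v ∈ X)
    (hX2 : ((graphOf (E.erase s(u, v))).induce X).Reachable ⟨p, hpX⟩ ⟨v, hvX⟩)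
    (hY2 : ∀ (huY : u ∈ Y) (hvY : v ∈ Y),
      ((graphOf (E.erase s(u, v))).induce Y).Reachable ⟨p, hpY⟩ ⟨v, hvY⟩) :
    False := by
  set E2 := E.erase s(u, v) with hE2
  set F := insert s(u, p) E2 with hF
  have hsub : E2 ⊆ F := Finset.subset_insert _ _
  have huZ : u ∈ Z := hN.2.1 _ he u (Sym2.mem_mk_left _ _)
  have hNF : NiceG Z X Y F := by
    refine ⟨?_, ?_, ?_, ?_⟩
    · intro g hg
      rcases Finset.mem_insert.1 hg with rfl | hg
      · rw [Sym2.mk_isDiag_iff]; exact fun h => hpu h.symm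
      · exact hN.1 g (Finset.mem_of_mem_erase hg)
    · intro g hg x hx
      rcases Finset.mem_insert.1 hg with rfl | hg
      · rcases Sym2.mem_iff.1 hx with rfl | rfl
        · exact huZ
        · exact hpZ
      · exact hN.2.1 g (Finset.mem_of_mem_erase hg) x hx
    · refine connected_transfer ?_ hN.2.2.1
      intro a b hab
      by_cases hf : s((a:Pt), (b:Pt)) = s(u, v)
      · have hup : ((graphOf F).induce X).Adj ⟨u, huX⟩ ⟨p, hpX⟩ :=
          ⟨fun h => hpu h.symm, Finset.mem_insert_self _ _⟩
        have hpvr : ((graphOf F).induce X).Reachable ⟨p, hpX⟩ ⟨v, hvX⟩ :=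
          hX2.mono (induce_mono_graphOf hsub X)
        rcases Sym2.eq_iff.1 hf with ⟨h1, h2⟩ | ⟨h1, h2⟩
        · have ha : a = ⟨u, huX⟩ := Subtype.ext h1
          have hb : b = ⟨v, hvX⟩ := Subtype.ext h2
          rw [ha, hb]; exact hup.reachable.trans hpvr
        · have ha : a = ⟨v, hvX⟩ := Subtype.ext h1
          have hb : b = ⟨u, huX⟩ := Subtype.ext h2
          rw [ha, hb]; exact (hup.reachable.trans hpvr).symm
      · exact SimpleGraph.Adj.reachable
          ⟨hab.1, Finset.mem_insert_of_mem (Finset.mem_erase.2 ⟨hf, hab.2⟩)⟩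
    · refine connected_transfer ?_ hN.2.2.2
      intro a b hab
      by_cases hf : s((a:Pt), (b:Pt)) = s(u, v)
      · rcases Sym2.eq_iff.1 hf with ⟨h1, h2⟩ | ⟨h1, h2⟩
        · have huY : u ∈ Y := h1 ▸ a.2
          have hvY : v ∈ Y := h2 ▸ b.2
          have hup : ((graphOf F).induce Y).Adj ⟨u, huY⟩ ⟨p, hpY⟩ :=
            ⟨fun h => hpu h.symm, Finset.mem_insert_self _ _⟩
          have hpvr : ((graphOf F).induce Y).Reachable ⟨p, hpY⟩ ⟨v, hvY⟩ :=
            (hY2 huY hvY).mono (induce_mono_graphOf hsub Y)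
          have ha : a = ⟨u, huY⟩ := Subtype.ext h1
          have hb : b = ⟨v, hvY⟩ := Subtype.ext h2
          rw [ha, hb]; exact hup.reachable.trans hpvr
        · have huY : u ∈ Y := h2 ▸ b.2
          have hvY : v ∈ Y := h1 ▸ a.2
          have hup : ((graphOf F).induce Y).Adj ⟨u, huY⟩ ⟨p, hpY⟩ :=
            ⟨fun h => hpu h.symm, Finset.mem_insert_self _ _⟩
          have hpvr : ((graphOf F).induce Y).Reachable ⟨p, hpY⟩ ⟨v, hvY⟩ :=
            (hY2 huY hvY).mono (induce_mono_graphOf hsub Y)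
          have ha : a = ⟨v, hvY⟩ := Subtype.ext h1
          have hb : b = ⟨u, huY⟩ := Subtype.ext h2
          rw [ha, hb]; exact (hup.reachable.trans hpvr).symm
      · exact SimpleGraph.Adj.reachable
          ⟨hab.1, Finset.mem_insert_of_mem (Finset.mem_erase.2 ⟨hf, hab.2⟩)⟩
  have hwF : weight F < weight E := by
    have h1 : weight F ≤ edgeLen s(u, p) + weight E2 := weight_insert_le _ _
    have h2 : weight E2 = weight E - edgeLen s(u, v) := weight_erase he
    rw [edgeLen_mk] at h1
    rw [h2, edgeLen_mk] at h1
    linarith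
  exact absurd (hm F hNF) (not_le.2 hwF)

/-- The hard exchange (bad combo): `u, v, p` all lie in `X ∩ Y`; after deleting `s(u,v)`,
`p` reaches `v` in the `X`-graph but not in the `Y`-graph.  Then there is a strictly
cheaper `NiceG` set. -/
lemma RBP_core (Z : Finset Pt) (X Y : Set Pt) (E : Finset (Sym2 Pt))
    (hN : NiceG Z X Y E)
    (u v p : Pt) (he : s(u, v) ∈ E)
    (hpu : p ≠ u) (hpv : p ≠ v)
    (hd : dist u p + dist p v = dist u v)
    (hpZ : p ∈ Z) (hpX : p ∈ X) (hpY : p ∈ Y)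
    (huX : u ∈ X) (hvX : v ∈ X) (huY : u ∈ Y) (hvY : v ∈ Y)
    (hA2 : ((graphOf (E.erase s(u, v))).induce X).Reachable ⟨p, hpX⟩ ⟨v, hvX⟩)
    (hB2 : ¬ ((graphOf (E.erase s(u, v))).induce Y).Reachable ⟨p, hpY⟩ ⟨v, hvY⟩) :
    ∃ F, NiceG Z X Y F ∧ weight F < weight E := by
  classical
  set E2 := E.erase s(u, v) with hE2
  have huZ : u ∈ Z := hN.2.1 _ he u (Sym2.mem_mk_left _ _)
  have hvZ : v ∈ Z := hN.2.1 _ he v (Sym2.mem_mk_right _ _)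
  obtain ⟨W0⟩ := hA2
  set W : ((graphOf E2).induce X).Walk ⟨p, hpX⟩ ⟨v, hvX⟩ := W0.toPath.1 with hWdef
  have hWpath : W.IsPath := W0.toPath.2
  -- find a vertex of the walk outside Y
  have hex : ∃ z ∈ W.support, (z : Pt) ∉ Y := by
    by_contra hcon
    push_neg at hcon
    exact hB2 (reachable_in_other W hcon hpY hvY)
  obtain ⟨w, hw, hwY⟩ := hex
  have hwv : w ≠ (⟨v, hvX⟩ : X) := by
    intro h; exact hwY (by rw [h]; exact hvY)
  set W₁ := W.takeUntil w hw with hW₁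
  set W₂ := W.dropUntil w hw with hW₂
  obtain ⟨w', hadj, W₂', hW₂eq⟩ := SimpleGraph.Walk.exists_eq_cons_of_ne hwv W₂
  have hww' : (w : Pt) ≠ (w' : Pt) := hadj.1
  have hfE2 : s((w : Pt), (w' : Pt)) ∈ E2 := hadj.2
  set f : Sym2 Pt := s((w : Pt), (w' : Pt)) with hfdef
  set F := (insert s(u, p) (insert s(p, v) E2)).erase f with hFdef
  -- basic memberships in F
  have hupne : s(u, p) ≠ f := by
    intro h
    rcases Sym2.eq_iff.1 h with ⟨h1, _⟩ | ⟨_, h2⟩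
    · exact hwY (h1 ▸ huY)
    · exact hwY (h2 ▸ hpY)
  have hpvne : s(p, v) ≠ f := by
    intro h
    rcases Sym2.eq_iff.1 h with ⟨h1, _⟩ | ⟨_, h2⟩
    · exact hwY (h1 ▸ hpY)
    · exact hwY (h2 ▸ hvY)
  have hupF : s(u, p) ∈ F := Finset.mem_erase.2 ⟨hupne, Finset.mem_insert_self _ _⟩
  have hpvF : s(p, v) ∈ F :=
    Finset.mem_erase.2 ⟨hpvne, Finset.mem_insert_of_mem (Finset.mem_insert_self _ _)⟩
  have hE2F : ∀ g : Sym2 Pt, g ∈ E2 → g ≠ f → g ∈ F := fun g hg hne =>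
    Finset.mem_erase.2 ⟨hne, Finset.mem_insert_of_mem (Finset.mem_insert_of_mem hg)⟩
  -- the subtype-level edge
  set f' : Sym2 X := s(w, w') with hf'def
  have hmapf : Sym2.map (Subtype.val) f' = f := by rw [hf'def, Sym2.map_pair_eq]
  -- nodup bookkeeping
  have hedges : W.edges = W₁.edges ++ (f' :: W₂'.edges) := by
    conv_lhs => rw [← W.take_spec hw]
    rw [SimpleGraph.Walk.edges_append, ← hW₁, ← hW₂, hW₂eq, SimpleGraph.Walk.edges_cons]
  have hnodup : (W₁.edges ++ (f' :: W₂'.edges)).Nodup := by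
    rw [← hedges]; exact hWpath.isTrail.edges_nodup
  have hfW₁ : f' ∉ W₁.edges := by
    intro hmem
    exact (List.nodup_append.1 hnodup).2.2 f' hmem f' List.mem_cons_self rfl
  have hfW₂' : f' ∉ W₂'.edges :=
    (List.nodup_cons.1 (List.nodup_append.1 hnodup).2.1).1
  have hmap_ne : ∀ g : Sym2 X, g ≠ f' → Sym2.map (Subtype.val) g ≠ f := by
    intro g hg hmap
    exact hg (Sym2.map.injective Subtype.val_injective (by rw [hmap, hmapf]))
  have hW₁F : ∀ g ∈ W₁.edges, Sym2.map (Subtype.val) g ∈ F := by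
    intro g hg
    exact hE2F _ (edge_of_walk_mem W₁ hg) (hmap_ne g (fun h => hfW₁ (h ▸ hg)))
  have hW₂'F : ∀ g ∈ W₂'.edges, Sym2.map (Subtype.val) g ∈ F := by
    intro g hg
    exact hE2F _ (edge_of_walk_mem W₂' hg) (hmap_ne g (fun h => hfW₂' (h ▸ hg)))
  -- reachability facts in the X-graph of F
  have rup : ((graphOf F).induce X).Adj ⟨u, huX⟩ ⟨p, hpX⟩ := ⟨fun h => hpu h.symm, hupF⟩
  have rpv : ((graphOf F).induce X).Adj ⟨p, hpX⟩ ⟨v, hvX⟩ := ⟨hpv, hpvF⟩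
  have rw1 : ((graphOf F).induce X).Reachable ⟨p, hpX⟩ w := walk_reach_mono W₁ hW₁F
  have rw2 : ((graphOf F).induce X).Reachable w' ⟨v, hvX⟩ := walk_reach_mono W₂' hW₂'F
  have reach_ww' : ((graphOf F).induce X).Reachable w w' :=
    (rw1.symm.trans rpv.reachable).trans rw2.symm
  have reach_uvX : ((graphOf F).induce X).Reachable ⟨u, huX⟩ ⟨v, hvX⟩ :=
    rup.reachable.trans rpv.reachable
  refine ⟨F, ⟨?_, ?_, ?_, ?_⟩, ?_⟩
  · -- no diagonal edges
    intro g hg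
    rcases Finset.mem_insert.1 (Finset.mem_of_mem_erase hg) with rfl | hg'
    · rw [Sym2.mk_isDiag_iff]; exact fun h => hpu h.symm
    · rcases Finset.mem_insert.1 hg' with rfl | hg''
      · rw [Sym2.mk_isDiag_iff]; exact hpv
      · exact hN.1 g (Finset.mem_of_mem_erase hg'')
  · -- endpoints in Z
    intro g hg x hx
    rcases Finset.mem_insert.1 (Finset.mem_of_mem_erase hg) with rfl | hg'
    · rcases Sym2.mem_iff.1 hx with rfl | rfl
      · exact huZ
      · exact hpZ
    · rcases Finset.mem_insert.1 hg' with rfl | hg''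
      · rcases Sym2.mem_iff.1 hx with rfl | rfl
        · exact hpZ
        · exact hvZ
      · exact hN.2.1 g (Finset.mem_of_mem_erase hg'') x hx
  · -- X-graph of F connected
    refine connected_transfer ?_ hN.2.2.1
    intro a b hab
    by_cases hf1 : s((a:Pt), (b:Pt)) = s(u, v)
    · rcases Sym2.eq_iff.1 hf1 with ⟨h1, h2⟩ | ⟨h1, h2⟩
      · have ha : a = ⟨u, huX⟩ := Subtype.ext h1
        have hb : b = ⟨v, hvX⟩ := Subtype.ext h2
        rw [ha, hb]; exact reach_uvX
      · have ha : a = ⟨v, hvX⟩ := Subtype.ext h1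
        have hb : b = ⟨u, huX⟩ := Subtype.ext h2
        rw [ha, hb]; exact reach_uvX.symm
    · by_cases hf2 : s((a:Pt), (b:Pt)) = f
      · rcases Sym2.eq_iff.1 hf2 with ⟨h1, h2⟩ | ⟨h1, h2⟩
        · have ha : a = w := Subtype.ext h1
          have hb : b = w' := Subtype.ext h2
          rw [ha, hb]; exact reach_ww'
        · have ha : a = w' := Subtype.ext h1
          have hb : b = w := Subtype.ext h2
          rw [ha, hb]; exact reach_ww'.symm
      · exact SimpleGraph.Adj.reachable
          ⟨hab.1, hE2F _ (Finset.mem_erase.2 ⟨hf1, hab.2⟩) hf2⟩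
  · -- Y-graph of F connected
    refine connected_transfer ?_ hN.2.2.2
    intro a b hab
    by_cases hf1 : s((a:Pt), (b:Pt)) = s(u, v)
    · have rupY : ((graphOf F).induce Y).Adj ⟨u, huY⟩ ⟨p, hpY⟩ := ⟨fun h => hpu h.symm, hupF⟩
      have rpvY : ((graphOf F).induce Y).Adj ⟨p, hpY⟩ ⟨v, hvY⟩ := ⟨hpv, hpvF⟩
      rcases Sym2.eq_iff.1 hf1 with ⟨h1, h2⟩ | ⟨h1, h2⟩
      · have ha : a = ⟨u, huY⟩ := Subtype.ext h1
        have hb : b = ⟨v, hvY⟩ := Subtype.ext h2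
        rw [ha, hb]; exact rupY.reachable.trans rpvY.reachable
      · have ha : a = ⟨v, hvY⟩ := Subtype.ext h1
        have hb : b = ⟨u, huY⟩ := Subtype.ext h2
        rw [ha, hb]; exact (rupY.reachable.trans rpvY.reachable).symm
    · by_cases hf2 : s((a:Pt), (b:Pt)) = f
      · exfalso
        rcases Sym2.eq_iff.1 hf2 with ⟨h1, _⟩ | ⟨_, h2⟩
        · exact hwY (h1 ▸ a.2)
        · exact hwY (h2 ▸ b.2)
      · exact SimpleGraph.Adj.reachable
          ⟨hab.1, hE2F _ (Finset.mem_erase.2 ⟨hf1, hab.2⟩) hf2⟩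
  · -- weight strictly decreases
    have hfI : f ∈ insert s(u, p) (insert s(p, v) E2) :=
      Finset.mem_insert_of_mem (Finset.mem_insert_of_mem hfE2)
    have h0 : weight F = weight (insert s(u, p) (insert s(p, v) E2)) - edgeLen f :=
      weight_erase hfI
    have h1 : weight (insert s(u, p) (insert s(p, v) E2)) ≤
        edgeLen s(u, p) + weight (insert s(p, v) E2) := weight_insert_le _ _
    have h2 : weight (insert s(p, v) E2) ≤ edgeLen s(p, v) + weight E2 := weight_insert_le _ _
    have h3 : weight E2 = weight E - edgeLen s(u, v) := weight_erase he
    have h4 : (0:ℝ) < edgeLen f := by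
      rw [hfdef, edgeLen_mk]; exact dist_pos.2 hww'
    rw [edgeLen_mk] at h1 h2
    rw [h3, edgeLen_mk] at h2
    rw [h0]
    linarith

/-- The case where the edge is in neither induced graph. -/
lemma RBP_mixed (Z : Finset Pt) (X Y : Set Pt) (E : Finset (Sym2 Pt))
    (hN : NiceG Z X Y E) (hm : ∀ E', NiceG Z X Y E' → weight E ≤ weight E')
    (u v : Pt) (he : s(u, v) ∈ E)
    (hX : ¬(u ∈ X ∧ v ∈ X)) (hY : ¬(u ∈ Y ∧ v ∈ Y)) : False := by
  have huv : u ≠ v := fun h => hN.1 _ he (Sym2.mk_isDiag_iff.2 h)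
  set F := E.erase s(u, v) with hFdef
  have hNF : NiceG Z X Y F := by
    refine ⟨fun g hg => hN.1 g (Finset.mem_of_mem_erase hg),
      fun g hg => hN.2.1 g (Finset.mem_of_mem_erase hg), ?_, ?_⟩
    · refine connected_transfer ?_ hN.2.2.1
      intro a b hab
      by_cases hf : s((a:Pt), (b:Pt)) = s(u, v)
      · exfalso
        rcases Sym2.eq_iff.1 hf with ⟨h1, h2⟩ | ⟨h1, h2⟩
        · exact hX ⟨h1 ▸ a.2, h2 ▸ b.2⟩
        · exact hX ⟨h2 ▸ b.2, h1 ▸ a.2⟩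
      · exact SimpleGraph.Adj.reachable ⟨hab.1, Finset.mem_erase.2 ⟨hf, hab.2⟩⟩
    · refine connected_transfer ?_ hN.2.2.2
      intro a b hab
      by_cases hf : s((a:Pt), (b:Pt)) = s(u, v)
      · exfalso
        rcases Sym2.eq_iff.1 hf with ⟨h1, h2⟩ | ⟨h1, h2⟩
        · exact hY ⟨h1 ▸ a.2, h2 ▸ b.2⟩
        · exact hY ⟨h2 ▸ b.2, h1 ▸ a.2⟩
      · exact SimpleGraph.Adj.reachable ⟨hab.1, Finset.mem_erase.2 ⟨hf, hab.2⟩⟩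
  have hw : weight F < weight E := by
    have h0 : weight F = weight E - edgeLen s(u, v) := weight_erase he
    have h1 : (0:ℝ) < edgeLen s(u, v) := by rw [edgeLen_mk]; exact dist_pos.2 huv
    linarith
  exact absurd (hm F hNF) (not_le.2 hw)

/-- Main auxiliary lemma: the crossed edge has both endpoints in `X`. -/
lemma RBP_aux (Z : Finset Pt) (X Y : Set Pt) (E : Finset (Sym2 Pt))
    (hN : NiceG Z X Y E) (hm : ∀ E', NiceG Z X Y E' → weight E ≤ weight E')
    (u v p : Pt) (he : s(u, v) ∈ E) (hseg : p ∈ openSegment ℝ u v)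
    (hpZ : p ∈ Z) (hpX : p ∈ X) (hpY : p ∈ Y) (huX : u ∈ X) (hvX : v ∈ X) : False := by
  have huv : u ≠ v := fun h => hN.1 _ he (Sym2.mk_isDiag_iff.2 h)
  have hpu : p ≠ u := fun h => huv (left_mem_openSegment_iff.1 (h ▸ hseg))
  have hpv : p ≠ v := fun h => huv (right_mem_openSegment_iff.1 (h ▸ hseg))
  have hd : dist u p + dist p v = dist u v :=
    dist_add_dist_of_mem_segment (openSegment_subset_segment ℝ u v hseg)
  have hd1 : dist u p < dist u v := by
    have : (0:ℝ) < dist p v := dist_pos.2 hpv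
    linarith
  have hd2 : dist v p < dist v u := by
    have h1 : (0:ℝ) < dist u p := dist_pos.2 (Ne.symm hpu)
    rw [dist_comm v p, dist_comm v u]
    linarith
  have hswap : s(v, u) = s(u, v) := Sym2.eq_swap
  have hor := reach_or (u := (⟨u, huX⟩ : X)) (v := (⟨v, hvX⟩ : X)) hN.2.2.1 ⟨p, hpX⟩
  by_cases hBoth : u ∈ Y ∧ v ∈ Y
  · obtain ⟨huY, hvY⟩ := hBoth
    have horY := reach_or (u := (⟨u, huY⟩ : Y)) (v := (⟨v, hvY⟩ : Y)) hN.2.2.2 ⟨p, hpY⟩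
    by_cases hB2 : ((graphOf (E.erase s(u, v))).induce Y).Reachable ⟨p, hpY⟩ ⟨v, hvY⟩
    · by_cases hA2 : ((graphOf (E.erase s(u, v))).induce X).Reachable ⟨p, hpX⟩ ⟨v, hvX⟩
      · exact RBP_easy_up Z X Y E hN hm u v p he hpu hpv hd1 hpZ hpX hpY huX hvX hA2
          (fun _ _ => hB2)
      · obtain ⟨F, hNF, hwF⟩ := RBP_core Z Y X E hN.swap u v p he hpu hpv hd hpZ hpY hpX
          huY hvY huX hvX hB2 hA2
        exact absurd (hm F hNF.swap) (not_le.2 hwF)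
    · by_cases hA2 : ((graphOf (E.erase s(u, v))).induce X).Reachable ⟨p, hpX⟩ ⟨v, hvX⟩
      · obtain ⟨F, hNF, hwF⟩ := RBP_core Z X Y E hN u v p he hpu hpv hd hpZ hpX hpY
          huX hvX huY hvY hA2 hB2
        exact absurd (hm F hNF) (not_le.2 hwF)
      · have hA1 := hor.resolve_right hA2
        have hB1 := horY.resolve_right hB2
        refine RBP_easy_up Z X Y E hN hm v u p (hswap ▸ he) hpv hpu hd2 hpZ hpX hpY hvX huX
          ?_ ?_
        · rw [hswap]; exact hA1
        · intro _ _; rw [hswap]; exact hB1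
  · rcases hor with hA1 | hA2
    · refine RBP_easy_up Z X Y E hN hm v u p (hswap ▸ he) hpv hpu hd2 hpZ hpX hpY hvX huX
        ?_ ?_
      · rw [hswap]; exact hA1
      · intro h1 h2; exact absurd ⟨h2, h1⟩ hBoth
    · exact RBP_easy_up Z X Y E hN hm u v p he hpu hpv hd1 hpZ hpX hpY huX hvX hA2
        (fun h1 h2 => absurd ⟨h1, h2⟩ hBoth)

/-- `E` is the edge set of a red-blue-purple spanning graph of `(R, B, P)`. -/
def IsRBP (R B P : Finset Pt) (E : Finset (Sym2 Pt)) : Prop :=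
  (∀ e ∈ E, ¬ e.IsDiag) ∧
  (∀ e ∈ E, ∀ x ∈ e, x ∈ R ∪ B ∪ P) ∧
  ((graphOf E).induce (↑(R ∪ P) : Set Pt)).Connected ∧
  ((graphOf E).induce (↑(B ∪ P) : Set Pt)).Connected

/-- `E` is the edge set of a minimum red-blue-purple spanning graph of `(R, B, P)`. -/
def IsMinRBP (R B P : Finset Pt) (E : Finset (Sym2 Pt)) : Prop :=
  IsRBP R B P E ∧ ∀ E', IsRBP R B P E' → weight E ≤ weight E'

/-- if all points lie on a common line, then for every edge `uv` of a
minimum RBP spanning graph, no purple point lies in the open segment between `u`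
and `v`. -/
theorem line_minRBP_no_purple_inside_edge (R B P : Finset Pt)
    (hRB : Disjoint R B) (hRP : Disjoint R P) (hBP : Disjoint B P)
    (hline : Collinear ℝ (↑(R ∪ B ∪ P) : Set Pt))
    (E : Finset (Sym2 Pt)) (hE : IsMinRBP R B P E) :
    ∀ u v : Pt, s(u, v) ∈ E → ∀ p ∈ P, p ∉ openSegment ℝ u v := by
  intro u v he p hpP hseg
  set Z : Finset Pt := R ∪ B ∪ P with hZ
  set X : Set Pt := (↑(R ∪ P) : Set Pt) with hX
  set Y : Set Pt := (↑(B ∪ P) : Set Pt) with hY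
  have hN : NiceG Z X Y E := hE.1
  have hm : ∀ E', NiceG Z X Y E' → weight E ≤ weight E' := fun E' h => hE.2 E' h
  have hpZ : p ∈ Z := Finset.mem_union_right _ hpP
  have hpX : p ∈ X := by
    rw [hX]; exact Finset.mem_coe.2 (Finset.mem_union_right _ hpP)
  have hpY : p ∈ Y := by
    rw [hY]; exact Finset.mem_coe.2 (Finset.mem_union_right _ hpP)
  have hmemXY : ∀ x : Pt, x ∈ Z → x ∈ X ∨ x ∈ Y := by
    intro x hx
    rcases Finset.mem_union.1 hx with hx' | hxP
    · rcases Finset.mem_union.1 hx' with hxR | hxB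
      · exact Or.inl (Finset.mem_coe.2 (Finset.mem_union_left _ hxR))
      · exact Or.inr (Finset.mem_coe.2 (Finset.mem_union_left _ hxB))
    · exact Or.inl (Finset.mem_coe.2 (Finset.mem_union_right _ hxP))
  by_cases hXc : u ∈ X ∧ v ∈ X
  · exact RBP_aux Z X Y E hN hm u v p he hseg hpZ hpX hpY hXc.1 hXc.2
  · by_cases hYc : u ∈ Y ∧ v ∈ Y
    · exact RBP_aux Z Y X E hN.swap (fun E' h => hm E' h.swap) u v p he hseg hpZ hpY hpX
        hYc.1 hYc.2
    · exact RBP_mixed Z X Y E hN hm u v he hXc hYc
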